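/- arXiv:1901.06806 — 2 statements merged into one kernel-verified Lean document; each statement's English description precedes it below -/
import Mathlib

section
/- If P is a finitely generated projective faithful module over a commutative ring R, then the endomorphism algebra End_R(P) is an Azumaya R-algebra. In particular, endomorphism algebras of faithful finite projective modules represent the trivial class of Azumaya algebras. -/
open TensorProduct in
/-- The canonical map `A ⊗[R] Aᵐᵒᵖ →ₗ[R] Module.End R A`, sending `a ⊗ b` to
`x ↦ a * x * b.unop`. -/
noncomputable def mulLeftRight (R A : Type*) [CommRing R] [Ring A] [Algebra R A] :
    A ⊗[R] Aᵐᵒᵖ →ₗ[R] Module.End R A :=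
  TensorProduct.lift <|
    LinearMap.mk₂ R
      (fun a b => (LinearMap.mulRight R b.unop) ∘ₗ (LinearMap.mulLeft R a))
      (fun a a' b => by ext x; simp [add_mul, mul_add])
      (fun r a b => by ext x; simp [smul_mul_assoc, mul_smul_comm])
      (fun a b b' => by ext x; simp [add_mul, mul_add])
      (fun r a b => by ext x; simp [smul_mul_assoc, mul_smul_comm])

/-- An `R`-algebra `A` is *Azumaya* if it is a finitely generated projective faithful
`R`-module and the canonical map `A ⊗[R] Aᵐᵒᵖ → Module.End R A`,
`a ⊗ b ↦ (x ↦ a * x * b)`, is bijective. -/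
def IsAzumaya' (R A : Type*) [CommRing R] [Ring A] [Algebra R A] : Prop :=
  Module.Finite R A ∧ Module.Projective R A ∧ FaithfulSMul R A ∧
    Function.Bijective (mulLeftRight R A)

open TensorProduct MulOpposite Finset

/-- Conjugation of endomorphisms by a pair of maps, as a linear map. -/
def endComp {R M N : Type*} [CommRing R] [AddCommGroup M] [Module R M]
    [AddCommGroup N] [Module R N] (fs : M →ₗ[R] N) (gs : N →ₗ[R] M) :
    Module.End R M →ₗ[R] Module.End R N where
  toFun d := fs ∘ₗ d ∘ₗ gs
  map_add' d d' := by ext p; simp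
  map_smul' r d := by ext p; simp

@[simp] theorem endComp_apply {R M N : Type*} [CommRing R] [AddCommGroup M] [Module R M]
    [AddCommGroup N] [Module R N] (fs : M →ₗ[R] N) (gs : N →ₗ[R] M)
    (d : Module.End R M) (p : N) : endComp fs gs d p = fs (d (gs p)) := rfl

theorem mulLeftRight_tmul_apply (R A : Type*) [CommRing R] [Ring A] [Algebra R A]
    (a b c : A) : mulLeftRight R A (a ⊗ₜ[R] op b) c = a * c * b := by
  simp [mulLeftRight]

/-- If `P` is a finitely generated projective faithful module over a commutative ring `R`,
then `Module.End R P` is an Azumaya `R`-algebra. -/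
theorem end_isAzumaya (R : Type*) [CommRing R] (P : Type*) [AddCommGroup P] [Module R P]
    [Module.Finite R P] [Module.Projective R P] [FaithfulSMul R P] :
    IsAzumaya' R (Module.End R P) := by
  obtain ⟨n, fs, gs, -, -, hfg⟩ := Module.Finite.exists_comp_eq_id_of_projective R P
  have hfg' : ∀ p : P, fs (gs p) = p := fun p => by
    simpa using LinearMap.congr_fun hfg p
  -- retraction of `End R (Fin n → R)` onto `End R P`
  have hfin : Module.Finite R (Module.End R P) := by
    refine Module.Finite.of_surjective (endComp fs gs) fun c => ⟨endComp gs fs c, ?_⟩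
    ext p; simp [endComp_apply, hfg']
  have hproj : Module.Projective R (Module.End R P) := by
    refine Module.Projective.of_split (M := Module.End R (Fin n → R))
      (endComp gs fs) (endComp fs gs) ?_
    ext c p
    simp [endComp_apply, hfg']
  have hfaith : FaithfulSMul R (Module.End R P) := by
    refine ⟨fun {r s} h => eq_of_smul_eq_smul (M := R) (α := P) fun p => ?_⟩
    simpa using LinearMap.congr_fun (h (1 : Module.End R P)) p
  refine ⟨hfin, hproj, hfaith, ?_⟩
  set x : Fin n → P := fun i => fs (Pi.single i 1) with hxdef
  set f : Fin n → (P →ₗ[R] R) := fun i => (LinearMap.proj i) ∘ₗ gs with hfdef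
  have hx : ∀ v : P, ∑ i, f i v • x i = v := by
    intro v
    have h1 : ∑ i, f i v • x i = fs (∑ i, gs v i • (Pi.single i 1 : Fin n → R)) := by
      rw [map_sum]
      simp [hxdef, hfdef, map_smul]
    rw [h1]
    have h2 : (∑ i, gs v i • (Pi.single i 1 : Fin n → R)) = gs v := by
      ext j
      simp [Finset.sum_apply, Pi.single_apply, Finset.sum_ite_eq]
    rw [h2, hfg']
  set e : Fin n → Fin n → Module.End R P := fun i j => (f j).smulRight (x i) with hedef
  have he : ∀ i j v, e i j v = f j v • x i := fun _ _ _ => rfl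
  have h1 : ∀ (c : Module.End R P) (i j k : Fin n),
      e k i * c * e j k = f i (c (x j)) • e k k := by
    intro c i j k
    ext v
    simp only [Module.End.mul_apply, he, LinearMap.smul_apply, map_smul, smul_smul]
    rw [mul_comm]
  have hone : (∑ k, e k k) = (1 : Module.End R P) := by
    ext v
    simp [he, hx v]
  have hsum : ∀ c : Module.End R P, ∑ j, ∑ k, f j (c (x k)) • e j k = c := by
    intro c
    ext v
    simp only [LinearMap.sum_apply, LinearMap.smul_apply, he]
    rw [Finset.sum_comm]
    have h3 : ∀ k, ∑ j, f j (c (x k)) • f k v • x j = f k v • c (x k) := by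
      intro k
      simp_rw [smul_comm _ (f k v)]
      rw [← Finset.smul_sum, hx]
    simp_rw [h3]
    calc ∑ k, f k v • c (x k) = c (∑ k, f k v • x k) := by
          rw [map_sum]; simp
      _ = c v := by rw [hx]
  set Ψ : Module.End R (Module.End R P) → (Module.End R P) ⊗[R] (Module.End R P)ᵐᵒᵖ :=
    fun F => ∑ i, ∑ j, ∑ k, (F (e i j) * e k i) ⊗ₜ[R] op (e j k) with hΨ
  constructor
  · -- injectivity
    have hinv : ∀ t : (Module.End R P) ⊗[R] (Module.End R P)ᵐᵒᵖ,
          Ψ (mulLeftRight R (Module.End R P) t) = t := by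
        intro t
        induction t using TensorProduct.induction_on with
        | zero => simp [hΨ]
        | tmul a b =>
          rw [hΨ]
          have hb : b = op b.unop := rfl
          calc ∑ i, ∑ j, ∑ k,
                (mulLeftRight R (Module.End R P) (a ⊗ₜ[R] b) (e i j) * e k i) ⊗ₜ[R] op (e j k)
              = ∑ i, ∑ j, ∑ k, (f j (b.unop (x k)) • (a * e i i)) ⊗ₜ[R] op (e j k) := by
                refine Finset.sum_congr rfl fun i _ => Finset.sum_congr rfl fun j _ =>
                  Finset.sum_congr rfl fun k _ => ?_
                rw [hb, mulLeftRight_tmul_apply]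
                congr 1
                rw [mul_assoc, mul_assoc, ← mul_assoc (e i j), h1 b.unop j k i, mul_smul_comm]
                rfl
            _ = a ⊗ₜ[R] b := by
                rw [Finset.sum_comm]
                have h4 : ∀ j, ∑ i : Fin n, ∑ k,
                    (f j (b.unop (x k)) • (a * e i i)) ⊗ₜ[R] op (e j k)
                    = ∑ k, (f j (b.unop (x k)) • a) ⊗ₜ[R] op (e j k) := by
                  intro j
                  rw [Finset.sum_comm]
                  refine Finset.sum_congr rfl fun k _ => ?_
                  rw [← TensorProduct.sum_tmul]
                  congr 1
                  rw [← Finset.smul_sum, ← Finset.mul_sum, hone, mul_one]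
                simp_rw [h4]
                calc ∑ j, ∑ k, (f j (b.unop (x k)) • a) ⊗ₜ[R] op (e j k)
                    = ∑ j, ∑ k, a ⊗ₜ[R] op (f j (b.unop (x k)) • e j k) := by
                      simp_rw [TensorProduct.smul_tmul, op_smul]
                  _ = a ⊗ₜ[R] b := by
                      simp_rw [← TensorProduct.tmul_sum, ← op_sum, hsum b.unop]
                      exact congrArg _ hb.symm
        | add t t' ht ht' =>
          simp only [hΨ, map_add, LinearMap.add_apply, add_mul, TensorProduct.add_tmul,
            Finset.sum_add_distrib]
          simp only [hΨ] at ht ht'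
          rw [ht, ht']
    intro t t' h
    rw [← hinv t, ← hinv t', h]
  · -- surjectivity
    intro F
    refine ⟨Ψ F, LinearMap.ext fun c => ?_⟩
    rw [hΨ]
    simp only [map_sum, LinearMap.sum_apply]
    calc ∑ i, ∑ j, ∑ k,
          mulLeftRight R (Module.End R P) ((F (e i j) * e k i) ⊗ₜ[R] op (e j k)) c
        = ∑ i, ∑ j, ∑ k, f i (c (x j)) • (F (e i j) * e k k) := by
          refine Finset.sum_congr rfl fun i _ => Finset.sum_congr rfl fun j _ =>
            Finset.sum_congr rfl fun k _ => ?_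
          rw [mulLeftRight_tmul_apply, mul_assoc, mul_assoc, ← mul_assoc (e k i),
            h1 c i j k, mul_smul_comm]
      _ = F c := by
          have h5 : ∀ i j, ∑ k, f i (c (x j)) • (F (e i j) * e k k)
              = F (f i (c (x j)) • e i j) := by
            intro i j
            rw [← Finset.smul_sum, ← Finset.mul_sum, hone, mul_one, map_smul]
          simp_rw [h5, ← map_sum]
          rw [hsum c]
end

section
/- Skolem–Noether over a field: every k-algebra automorphism of the matrix algebra Mat_n(k), for k a field and n ≥ 1, is inner, i.e., of the form x ↦ u x u⁻¹ for some invertible matrix u. -/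
open Matrix

/-- Skolem–Noether over a field: every `k`-algebra automorphism of the matrix algebra
`Matₙ(k)`, for `k` a field and `n ≥ 1`, is inner. -/
theorem skolem_noether_matrix (k : Type*) [Field k] (n : ℕ) (hn : 1 ≤ n)
    (φ : Matrix (Fin n) (Fin n) k ≃ₐ[k] Matrix (Fin n) (Fin n) k) :
    ∃ u : (Matrix (Fin n) (Fin n) k)ˣ, ∀ x, φ x = u.val * x * u.inv := by
  set z : Fin n := ⟨0, hn⟩ with hz
  set E : Fin n → Matrix (Fin n) (Fin n) k := fun j => Matrix.single j z 1 with hEdef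
  -- expansion of x * E j
  have hE : ∀ (x : Matrix (Fin n) (Fin n) k) (j : Fin n),
      x * E j = ∑ m, x m j • E m := by
    intro x j
    ext i l
    by_cases hl : z = l <;>
      simp [hEdef, Matrix.mul_apply, Matrix.single, Matrix.sum_apply, hl, mul_comm]
  have he : φ (E z) ≠ 0 := by
    intro h
    have : E z = 0 := by
      have := φ.injective (h.trans (map_zero φ).symm)
      simpa using this
    have := congrFun (congrFun this z) z
    simp [hEdef, Matrix.single] at this
  obtain ⟨c, r, hcr⟩ : ∃ c r, φ (E z) c r ≠ 0 := by
    by_contra h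
    push_neg at h
    exact he (by ext i j; simpa using h i j)
  set w : Fin n → k := Pi.single r 1 with hw
  set u : Matrix (Fin n) (Fin n) k := Matrix.of fun i j => (φ (E j) *ᵥ w) i with hu
  -- the intertwining relation
  have key : ∀ x, u * x = φ x * u := by
    intro x
    ext i j
    have h1 : (φ x * u) i j = (φ (x * E j) *ᵥ w) i := by
      simp only [hu, Matrix.mul_apply, Matrix.of_apply]
      rw [show φ (x * E j) = φ x * φ (E j) from map_mul φ _ _]
      simp [Matrix.mulVec, Matrix.mul_apply, dotProduct, Finset.mul_sum,
        Finset.sum_mul, mul_assoc]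
      rw [Finset.sum_comm]
    rw [h1, hE, map_sum]
    simp only [_root_.map_smul]
    simp only [Matrix.mul_apply, hu, Matrix.of_apply, Matrix.mulVec, dotProduct,
      Matrix.sum_apply, Pi.smul_apply, smul_eq_mul, Finset.mul_sum, Finset.sum_mul, mul_assoc]
    rw [Finset.sum_comm]
    refine Finset.sum_congr rfl fun m _ => Finset.sum_congr rfl fun y _ => ?_
    simp only [Matrix.smul_apply, smul_eq_mul]
    ring
  -- u is nonzero at (c, z)
  have hucz : u c z ≠ 0 := by
    simpa [hu, hw, Matrix.mulVec_single] using hcr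
  -- u has trivial kernel
  have hker : ¬ ∃ v ≠ 0, u *ᵥ v = 0 := by
    rintro ⟨v, hv, huv⟩
    obtain ⟨i, hi⟩ : ∃ i, v i ≠ 0 := by
      by_contra h; push_neg at h; exact hv (funext h)
    -- u *ᵥ (stdBasisMatrix z i 1 *ᵥ v) = 0
    have h2 : u *ᵥ (Matrix.single z i 1 *ᵥ v) = 0 := by
      rw [Matrix.mulVec_mulVec, key, ← Matrix.mulVec_mulVec, huv, Matrix.mulVec_zero]
    have h3 : Matrix.single z i 1 *ᵥ v = v i • (Pi.single z 1 : Fin n → k) := by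
      ext l
      rcases eq_or_ne z l with hl | hl
      · subst hl
        simp [Matrix.mulVec, Matrix.single, dotProduct, Pi.single_apply]
      · simp [Matrix.mulVec, Matrix.single, dotProduct, Pi.single_apply, hl, hl.symm]
    rw [h3, Matrix.mulVec_smul] at h2
    have h4 : u *ᵥ Pi.single z 1 = 0 := by
      have := smul_eq_zero.mp h2
      tauto
    have := congrFun h4 c
    simp [Matrix.mulVec_single] at this
    exact hucz this
  have hdet : u.det ≠ 0 := fun h => hker (Matrix.exists_mulVec_eq_zero_iff.mpr h)
  have hunit : IsUnit u := (Matrix.isUnit_iff_isUnit_det u).mpr hdet.isUnit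
  obtain ⟨U, hU⟩ := hunit
  refine ⟨U, fun x => ?_⟩
  have h5 : U.val * x = φ x * U.val := by rw [hU]; exact key x
  calc φ x = φ x * (U.val * U.inv) := by rw [U.val_inv, mul_one]
    _ = (φ x * U.val) * U.inv := by rw [mul_assoc]
    _ = U.val * x * U.inv := by rw [← h5]
end
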